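/- Let A = (A_{ij}) be an n×n operator matrix acting on the direct sum H = ⊕ᵢ Hᵢ of Hilbert spaces, with A_{ij} ∈ B(Hⱼ, Hᵢ). Then w(A) ≤ max over 1 ≤ i ≤ n of [ w(A_{ii}) + (1/2)·∑_{j≠i} (‖A_{ij}‖ + ‖A_{ji}‖) ]. -/

import Mathlib

open Complex

variable {H : Type*} [NormedAddCommGroup H] [InnerProductSpace ℂ H] [CompleteSpace H]

/-- The numerical radius `w(T) = sup {|⟨Tx,x⟩| : ‖x‖ = 1}`. -/
noncomputable def numRadius (T : H →L[ℂ] H) : ℝ :=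
  sSup {r : ℝ | ∃ x : H, ‖x‖ = 1 ∧ r = ‖(inner ℂ (T x) x : ℂ)‖}

/-- The Crawford number `m(T) = inf {|⟨Tx,x⟩| : ‖x‖ = 1}`. -/
noncomputable def crawford (T : H →L[ℂ] H) : ℝ :=
  sInf {r : ℝ | ∃ x : H, ‖x‖ = 1 ∧ r = ‖(inner ℂ (T x) x : ℂ)‖}

/-- The real part `Re(T) = (T + T*)/2`. -/
noncomputable def reOp (T : H →L[ℂ] H) : H →L[ℂ] H := (2 : ℂ)⁻¹ • (T + star T)

/-- The imaginary part `Im(T) = (T - T*)/(2i)`. -/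
noncomputable def imOp (T : H →L[ℂ] H) : H →L[ℂ] H := (2 * Complex.I)⁻¹ • (T - star T)

set_option linter.unusedSectionVars false


lemma numRadius_bddAbove (T : H →L[ℂ] H) :
    BddAbove {r : ℝ | ∃ x : H, ‖x‖ = 1 ∧ r = ‖(inner ℂ (T x) x : ℂ)‖} := by
  refine ⟨‖T‖, ?_⟩
  rintro r ⟨x, hx, rfl⟩
  calc ‖(inner ℂ (T x) x : ℂ)‖ ≤ ‖T x‖ * ‖x‖ := norm_inner_le_norm _ _
    _ ≤ ‖T‖ * ‖x‖ * ‖x‖ := by gcongr; exact T.le_opNorm x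
    _ = ‖T‖ := by rw [hx]; ring

lemma numRadius_nonneg (T : H →L[ℂ] H) : 0 ≤ numRadius T :=
  Real.sSup_nonneg (by rintro r ⟨x, hx, rfl⟩; positivity)

lemma norm_inner_le_numRadius (T : H →L[ℂ] H) (y : H) :
    ‖(inner ℂ (T y) y : ℂ)‖ ≤ numRadius T * ‖y‖ ^ 2 := by
  rcases eq_or_ne y 0 with rfl | hy
  · simp [numRadius_nonneg T]
  · have hc : (0:ℝ) < ‖y‖ := norm_pos_iff.mpr hy
    set u : H := ((‖y‖:ℂ))⁻¹ • y with hu_def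
    have hu : ‖u‖ = 1 := by
      rw [hu_def, norm_smul]; simp [hc.le, hc.ne']
    have hle : ‖(inner ℂ (T u) u : ℂ)‖ ≤ numRadius T :=
      le_csSup (numRadius_bddAbove T) ⟨u, hu, rfl⟩
    have hval : ‖(inner ℂ (T u) u : ℂ)‖ = (‖y‖^2)⁻¹ * ‖(inner ℂ (T y) y : ℂ)‖ := by
      rw [hu_def]
      simp only [map_smul, inner_smul_left, inner_smul_right, map_inv₀, Complex.conj_ofReal]
      rw [norm_mul, norm_mul]
      simp [Complex.norm_real, _root_.abs_of_nonneg hc.le]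
      ring
    rw [hval] at hle
    have := mul_le_mul_of_nonneg_right hle (by positivity : (0:ℝ) ≤ ‖y‖^2)
    rwa [inv_mul_eq_div, div_mul_cancel₀] at this
    positivity

lemma sum_erase_comm {n : ℕ} (f : Fin n → Fin n → ℝ) :
    ∑ i, ∑ j ∈ Finset.univ.erase i, f i j = ∑ i, ∑ j ∈ Finset.univ.erase i, f j i := by
  classical
  have h : ∀ (g : Fin n → Fin n → ℝ) (i : Fin n),
      ∑ j ∈ Finset.univ.erase i, g i j = ∑ j, if j = i then 0 else g i j := by
    intro g i
    have e := Finset.add_sum_erase Finset.univ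
      (fun j : Fin n => if j = i then 0 else g i j) (Finset.mem_univ i)
    simp only [if_pos rfl, if_true, ite_true, zero_add] at e
    have e2 : ∑ j ∈ Finset.univ.erase i, g i j
        = ∑ j ∈ Finset.univ.erase i, (if j = i then 0 else g i j) :=
      Finset.sum_congr rfl fun j hj => (if_neg (Finset.ne_of_mem_erase hj)).symm
    exact e2.trans e
  calc ∑ i, ∑ j ∈ Finset.univ.erase i, f i j
      = ∑ i, ∑ j, if j = i then 0 else f i j :=
        Finset.sum_congr rfl fun i _ => h f i
    _ = ∑ j, ∑ i, if j = i then 0 else f i j := Finset.sum_comm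
    _ = ∑ i, ∑ j ∈ Finset.univ.erase i, f j i := by
        refine Finset.sum_congr rfl fun k _ => ?_
        rw [h (fun a b => f b a) k]
        exact Finset.sum_congr rfl fun m _ => by
          by_cases hm : m = k <;> simp [hm, Ne.symm]

theorem stmt19 (n : ℕ) (hn : 0 < n) (Hs : Fin n → Type*)
    [∀ i, NormedAddCommGroup (Hs i)] [∀ i, InnerProductSpace ℂ (Hs i)]
    [∀ i, CompleteSpace (Hs i)]
    (A : PiLp 2 Hs →L[ℂ] PiLp 2 Hs) (Ab : ∀ i j, Hs j →L[ℂ] Hs i)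
    (hA : ∀ (x : PiLp 2 Hs) (i : Fin n), A x i = ∑ j, Ab i j (x j)) :
    numRadius A ≤
      Finset.univ.sup' (Finset.univ_nonempty_iff.mpr (Fin.pos_iff_nonempty.mp hn))
        (fun i => numRadius (Ab i i)
          + (1/2) * ∑ j ∈ Finset.univ.erase i, (‖Ab i j‖ + ‖Ab j i‖)) := by
  classical
  set c : Fin n → ℝ := fun i => numRadius (Ab i i)
      + (1/2) * ∑ j ∈ Finset.univ.erase i, (‖Ab i j‖ + ‖Ab j i‖) with hc_def
  set M : ℝ := Finset.univ.sup'
      (Finset.univ_nonempty_iff.mpr (Fin.pos_iff_nonempty.mp hn)) c with hM_def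
  have hM : ∀ i, c i ≤ M := fun i => Finset.le_sup' c (Finset.mem_univ i)
  have hc_nonneg : ∀ i, 0 ≤ c i := by
    intro i
    have h1 : (0:ℝ) ≤ ∑ j ∈ Finset.univ.erase i, (‖Ab i j‖ + ‖Ab j i‖) :=
      Finset.sum_nonneg fun j _ => by positivity
    have := numRadius_nonneg (Ab i i)
    rw [hc_def]; positivity
  have hM0 : 0 ≤ M := le_trans (hc_nonneg ⟨0, hn⟩) (hM ⟨0, hn⟩)
  apply Real.sSup_le _ hM0
  rintro r ⟨x, hx, rfl⟩
  have hx2 : ∑ i, ‖x i‖ ^ 2 = 1 := by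
    rw [← PiLp.norm_sq_eq_of_L2 Hs x, hx, one_pow]
  have hinner : (inner ℂ (A x) x : ℂ) = ∑ i, ∑ j, (inner ℂ ((Ab i j) (x j)) (x i) : ℂ) := by
    rw [PiLp.inner_apply]
    refine Finset.sum_congr rfl fun i _ => ?_
    rw [hA x i, sum_inner]
  calc ‖(inner ℂ (A x) x : ℂ)‖
      = ‖∑ i, ∑ j, (inner ℂ ((Ab i j) (x j)) (x i) : ℂ)‖ := by rw [hinner]
    _ ≤ ∑ i, ∑ j, ‖(inner ℂ ((Ab i j) (x j)) (x i) : ℂ)‖ :=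
        (norm_sum_le _ _).trans (Finset.sum_le_sum fun i _ => norm_sum_le _ _)
    _ ≤ ∑ i, (numRadius (Ab i i) * ‖x i‖ ^ 2
          + ∑ j ∈ Finset.univ.erase i, ‖Ab i j‖ * ((‖x i‖ ^ 2 + ‖x j‖ ^ 2) / 2)) := by
        refine Finset.sum_le_sum fun i _ => ?_
        have e := Finset.add_sum_erase Finset.univ
          (fun j : Fin n => ‖(inner ℂ ((Ab i j) (x j)) (x i) : ℂ)‖) (Finset.mem_univ i)
        rw [← e]
        refine add_le_add (norm_inner_le_numRadius (Ab i i) (x i)) ?_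
        refine Finset.sum_le_sum fun j _ => ?_
        calc ‖(inner ℂ ((Ab i j) (x j)) (x i) : ℂ)‖
            ≤ ‖(Ab i j) (x j)‖ * ‖x i‖ := norm_inner_le_norm _ _
          _ ≤ (‖Ab i j‖ * ‖x j‖) * ‖x i‖ := by
              gcongr; exact (Ab i j).le_opNorm (x j)
          _ ≤ ‖Ab i j‖ * ((‖x i‖ ^ 2 + ‖x j‖ ^ 2) / 2) := by
              rw [mul_assoc]
              have h2 : ‖x j‖ * ‖x i‖ ≤ (‖x i‖ ^ 2 + ‖x j‖ ^ 2) / 2 := by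
                nlinarith [sq_nonneg (‖x i‖ - ‖x j‖)]
              exact mul_le_mul_of_nonneg_left h2 (norm_nonneg _)
    _ = ∑ i, ‖x i‖ ^ 2 * c i := by
        have hswap := sum_erase_comm (n := n)
          (fun i j => ‖Ab i j‖ * ‖x j‖ ^ 2 / 2)
        calc ∑ i, (numRadius (Ab i i) * ‖x i‖ ^ 2
              + ∑ j ∈ Finset.univ.erase i, ‖Ab i j‖ * ((‖x i‖ ^ 2 + ‖x j‖ ^ 2) / 2))
            = ∑ i, (numRadius (Ab i i) * ‖x i‖ ^ 2
              + (∑ j ∈ Finset.univ.erase i, ‖Ab i j‖ * ‖x i‖ ^ 2 / 2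
                + ∑ j ∈ Finset.univ.erase i, ‖Ab i j‖ * ‖x j‖ ^ 2 / 2)) := by
              refine Finset.sum_congr rfl fun i _ => ?_
              rw [← Finset.sum_add_distrib]
              exact congrArg _ (Finset.sum_congr rfl fun j _ => by ring)
          _ = ∑ i, (numRadius (Ab i i) * ‖x i‖ ^ 2
              + (∑ j ∈ Finset.univ.erase i, ‖Ab i j‖ * ‖x i‖ ^ 2 / 2
                + ∑ j ∈ Finset.univ.erase i, ‖Ab j i‖ * ‖x i‖ ^ 2 / 2)) := by
              simp only [Finset.sum_add_distrib]
              rw [hswap]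
          _ = ∑ i, ‖x i‖ ^ 2 * c i := by
              refine Finset.sum_congr rfl fun i _ => ?_
              rw [hc_def, ← Finset.sum_add_distrib]
              simp only [mul_add, Finset.mul_sum]
              congr 1
              · ring
              · exact Finset.sum_congr rfl fun j _ => by ring
    _ ≤ ∑ i, ‖x i‖ ^ 2 * M := by
        refine Finset.sum_le_sum fun i _ => ?_
        exact mul_le_mul_of_nonneg_left (hM i) (by positivity)
    _ = M := by rw [← Finset.sum_mul, hx2, one_mul]
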